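/- Let M be a pointed metric space such that for every real Banach space Y the pair (M, Y) has the Lip-BPB property. Then there exists a single function η_M : (0,∞) → (0,∞), with η_M(ε) > 0 for all ε > 0 and depending only on M, such that for every real Banach space Y the pair (M, Y) has the Lip-BPB property witnessed by the function η_M. -/

import Mathlib

open Set Metric NNReal MeasureTheory

/-- A Lipschitz map vanishing at the base point `z`, i.e. an element of `Lip₀(M,Y)`. -/
def IsLip0 {M Y : Type*} [MetricSpace M] [NormedAddCommGroup Y]
    (z : M) (F : M → Y) : Prop :=
  (∃ K : ℝ≥0, LipschitzWith K F) ∧ F z = 0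

/-- The Lipschitz norm `‖F‖_L = sup {‖F p - F q‖ / d(p,q) : p ≠ q}`. -/
noncomputable def lipNorm {M Y : Type*} [MetricSpace M] [NormedAddCommGroup Y]
    (F : M → Y) : ℝ :=
  sSup {r : ℝ | ∃ p q : M, p ≠ q ∧ r = ‖F p - F q‖ / dist p q}

/-- `F` strongly attains its norm. -/
def StronglyAttains {M Y : Type*} [MetricSpace M] [NormedAddCommGroup Y]
    (F : M → Y) : Prop :=
  ∃ p q : M, p ≠ q ∧ ‖F p - F q‖ = lipNorm F * dist p q

/-- `F` is Lipschitz compact: its Lipschitz image is relatively compact. -/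
def IsLipCompact {M Y : Type*} [MetricSpace M] [NormedAddCommGroup Y] [NormedSpace ℝ Y]
    (F : M → Y) : Prop :=
  IsCompact (closure {y : Y | ∃ p q : M, p ≠ q ∧ y = (dist p q)⁻¹ • (F p - F q)})

/-- The pair `(M,Y)` has the Lip-BPB property witnessed by the function `η`. -/
def LipBPBWith (M : Type*) [MetricSpace M] (z : M)
    (Y : Type*) [NormedAddCommGroup Y] (η : ℝ → ℝ) : Prop :=
  (∀ ε > 0, η ε > 0) ∧
  ∀ ε > 0, ∀ F : M → Y, IsLip0 z F → lipNorm F = 1 →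
    ∀ p q : M, p ≠ q → ‖F p - F q‖ > (1 - η ε) * dist p q →
      ∃ G : M → Y, IsLip0 z G ∧ ∃ r s : M, r ≠ s ∧
        ‖G r - G s‖ = dist r s ∧ lipNorm G = 1 ∧
        lipNorm (fun x => G x - F x) < ε ∧
        (dist p r + dist q s) / dist p q < ε

/-- The pair `(M,Y)` has the Lip-BPB property. -/
def LipBPB (M : Type*) [MetricSpace M] (z : M)
    (Y : Type*) [NormedAddCommGroup Y] : Prop :=
  ∃ η : ℝ → ℝ, LipBPBWith M z Y η

/-- The pair `(M,Y)` has the Lip-BPB property for Lipschitz compact maps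
witnessed by the function `η`. -/
def LipBPBCompactWith (M : Type*) [MetricSpace M] (z : M)
    (Y : Type*) [NormedAddCommGroup Y] [NormedSpace ℝ Y] (η : ℝ → ℝ) : Prop :=
  (∀ ε > 0, η ε > 0) ∧
  ∀ ε > 0, ∀ F : M → Y, IsLip0 z F → IsLipCompact F → lipNorm F = 1 →
    ∀ p q : M, p ≠ q → ‖F p - F q‖ > (1 - η ε) * dist p q →
      ∃ G : M → Y, IsLip0 z G ∧ IsLipCompact G ∧ ∃ r s : M, r ≠ s ∧
        ‖G r - G s‖ = dist r s ∧ lipNorm G = 1 ∧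
        lipNorm (fun x => G x - F x) < ε ∧
        (dist p r + dist q s) / dist p q < ε

/-- The pair `(M,Y)` has the Lip-BPB property for Lipschitz compact maps. -/
def LipBPBCompact (M : Type*) [MetricSpace M] (z : M)
    (Y : Type*) [NormedAddCommGroup Y] [NormedSpace ℝ Y] : Prop :=
  ∃ η : ℝ → ℝ, LipBPBCompactWith M z Y η

/-- `SA(M,Y)` is dense in `Lip₀(M,Y)`. -/
def SADense (M : Type*) [MetricSpace M] (z : M)
    (Y : Type*) [NormedAddCommGroup Y] : Prop :=
  ∀ F : M → Y, IsLip0 z F → ∀ ε > 0,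
    ∃ G : M → Y, IsLip0 z G ∧ StronglyAttains G ∧ lipNorm (fun x => G x - F x) < ε

/-- `SA_K(M,Y)` is dense in `Lipc(M,Y)`. -/
def SAKDense (M : Type*) [MetricSpace M] (z : M)
    (Y : Type*) [NormedAddCommGroup Y] [NormedSpace ℝ Y] : Prop :=
  ∀ F : M → Y, IsLip0 z F → IsLipCompact F → ∀ ε > 0,
    ∃ G : M → Y, IsLip0 z G ∧ IsLipCompact G ∧ StronglyAttains G ∧
      lipNorm (fun x => G x - F x) < ε

universe u

section AuxLemmas

variable {M Y : Type*} [MetricSpace M] [NormedAddCommGroup Y]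

lemma lipNorm_nonneg' (F : M → Y) : 0 ≤ lipNorm F :=
  Real.sSup_nonneg (by rintro r ⟨p, q, hpq, rfl⟩; positivity)

lemma lipNorm_le' {F : M → Y} {C : ℝ} (hC : 0 ≤ C)
    (h : ∀ p q : M, ‖F p - F q‖ ≤ C * dist p q) : lipNorm F ≤ C := by
  refine Real.sSup_le ?_ hC
  rintro r ⟨p, q, hpq, rfl⟩
  rw [div_le_iff₀ (dist_pos.2 hpq)]
  exact h p q

lemma bddAbove_lipSet {F : M → Y} {K : ℝ≥0} (hK : LipschitzWith K F) :
    BddAbove {r : ℝ | ∃ p q : M, p ≠ q ∧ r = ‖F p - F q‖ / dist p q} := by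
  refine ⟨K, ?_⟩
  rintro r ⟨p, q, hpq, rfl⟩
  rw [div_le_iff₀ (dist_pos.2 hpq)]
  simpa [dist_eq_norm] using hK.dist_le_mul p q

lemma div_le_lipNorm' {F : M → Y} {K : ℝ≥0} (hK : LipschitzWith K F)
    {p q : M} (hpq : p ≠ q) : ‖F p - F q‖ / dist p q ≤ lipNorm F :=
  le_csSup (bddAbove_lipSet hK) ⟨p, q, hpq, rfl⟩

lemma norm_sub_le_lipNorm' {F : M → Y} {K : ℝ≥0} (hK : LipschitzWith K F)
    (p q : M) : ‖F p - F q‖ ≤ lipNorm F * dist p q := by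
  rcases eq_or_ne p q with rfl | hpq
  · simp
  · rw [← div_le_iff₀ (dist_pos.2 hpq)]
    exact div_le_lipNorm' hK hpq

end AuxLemmas

section LpAux

variable {E : ℕ → Type*} [∀ n, NormedAddCommGroup (E n)]

lemma lp_single_sub_top (n : ℕ) (a b : E n) :
    lp.single ⊤ n a - lp.single ⊤ n b = lp.single ⊤ n (a - b) := by
  refine lp.ext (funext fun j => ?_)
  rcases eq_or_ne j n with rfl | hj
  · simp [lp.coeFn_sub, lp.single_apply_self]
  · simp [lp.coeFn_sub, lp.single_apply_ne _ _ _ hj]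

lemma lp_single_zero_top (n : ℕ) :
    lp.single ⊤ n (0 : E n) = 0 := by
  have := lp_single_sub_top (E := E) n (0 : E n) 0
  simpa using this.symm

lemma lp_norm_single_top (n : ℕ) (a : E n) : ‖lp.single ⊤ n a‖ = ‖a‖ := by
  refine le_antisymm ?_ ?_
  · rw [lp.norm_eq_ciSup]
    refine ciSup_le fun j => ?_
    rcases eq_or_ne j n with rfl | hj
    · simp [lp.single_apply_self]
    · simp [lp.single_apply_ne _ _ _ hj, Pi.single_eq_of_ne hj]
  · simpa [lp.single_apply_self] using
      lp.norm_apply_le_norm ENNReal.top_ne_zero (lp.single ⊤ n a) n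

lemma lp_coord_sub (u v : lp E ⊤) (j : ℕ) : (u - v) j = u j - v j := by
  rw [lp.coeFn_sub]; rfl

lemma lp_norm_coord_eq {x : lp E ⊤} {n : ℕ} {c : ℝ} (hc : c < ‖x‖)
    (h : ∀ j, j ≠ n → ‖x j‖ ≤ c) : ‖x n‖ = ‖x‖ := by
  refine le_antisymm (lp.norm_apply_le_norm ENNReal.top_ne_zero x n) ?_
  have hmax : ‖x‖ ≤ max ‖x n‖ c := by
    rw [lp.norm_eq_ciSup]
    refine ciSup_le fun j => ?_
    rcases eq_or_ne j n with rfl | hj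
    · exact le_max_left _ _
    · exact (h j hj).trans (le_max_right _ _)
  rcases le_max_iff.1 hmax with h' | h'
  · exact h'
  · exact absurd h' (not_le.2 hc)

end LpAux

/-- A "bad point": a Banach space `Y` together with a norm-one `F ∈ Lip₀(M,Y)` which
almost attains its norm at `(p,q)` up to `δ`, yet admits no `ε`-close strongly attaining
perturbation. -/
structure BadPoint (M : Type*) [MetricSpace M] (z : M) (ε δ : ℝ) where
  (Y : Type u)
  [grp : NormedAddCommGroup Y]
  [sp : NormedSpace ℝ Y]
  [cpl : CompleteSpace Y]
  (F : M → Y)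
  (hF : IsLip0 z F)
  (hnorm : lipNorm F = 1)
  (p : M)
  (q : M)
  (hpq : p ≠ q)
  (hgt : ‖F p - F q‖ > (1 - δ) * dist p q)
  (hno : ¬ ∃ G : M → Y, IsLip0 z G ∧ ∃ r s : M, r ≠ s ∧
        ‖G r - G s‖ = dist r s ∧ lipNorm G = 1 ∧
        lipNorm (fun x => G x - F x) < ε ∧
        (dist p r + dist q s) / dist p q < ε)

attribute [instance] BadPoint.grp BadPoint.sp BadPoint.cpl

theorem exists_uniform_delta {M : Type*} [MetricSpace M] [CompleteSpace M] (z : M)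
    (h : ∀ (Y : Type u) [NormedAddCommGroup Y] [NormedSpace ℝ Y] [CompleteSpace Y],
      LipBPB M z Y) {ε : ℝ} (hε : 0 < ε) :
    ∃ δ > 0, ∀ (Y : Type u) [NormedAddCommGroup Y] [NormedSpace ℝ Y] [CompleteSpace Y],
      ∀ F : M → Y, IsLip0 z F → lipNorm F = 1 →
      ∀ p q : M, p ≠ q → ‖F p - F q‖ > (1 - δ) * dist p q →
        ∃ G : M → Y, IsLip0 z G ∧ ∃ r s : M, r ≠ s ∧
          ‖G r - G s‖ = dist r s ∧ lipNorm G = 1 ∧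
          lipNorm (fun x => G x - F x) < ε ∧
          (dist p r + dist q s) / dist p q < ε := by
  classical
  by_contra hcon
  have key : ∀ n : ℕ, Nonempty (BadPoint M z ε (1 / ((n : ℝ) + 1))) := by
    intro n
    by_contra hne
    refine hcon ⟨1 / ((n : ℝ) + 1), by positivity, ?_⟩
    intro Y _ _ _ F hF hFn p q hpq hgt
    by_contra hno
    exact hne ⟨BadPoint.mk Y F hF hFn p q hpq hgt hno⟩
  have B : ∀ n : ℕ, BadPoint M z ε (1 / ((n : ℝ) + 1)) := fun n => (key n).some
  haveI : Fact ((1 : ENNReal) ≤ ⊤) := ⟨le_top⟩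
  obtain ⟨ηY, hηpos, hηY⟩ := h (lp (fun k => (B k).Y) ⊤)
  set ε' := min ε (1 / 2) with hε'def
  have hε'pos : 0 < ε' := lt_min hε (by norm_num)
  have hε'le : ε' ≤ ε := min_le_left _ _
  have hε'half : ε' ≤ 1 / 2 := min_le_right _ _
  have hapos : 0 < ηY ε' := hηpos ε' hε'pos
  obtain ⟨n, hn⟩ := exists_nat_gt (1 / ηY ε')
  have hδn : 1 / ((n : ℝ) + 1) < ηY ε' := by
    rw [div_lt_iff₀ (by positivity : (0 : ℝ) < (n : ℝ) + 1), mul_comm]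
    have := (div_lt_iff₀ hapos).mp (hn.trans (lt_add_one _))
    linarith
  -- notation for the chosen bad point
  set Fn := (B n).F with hFndef
  set pn := (B n).p
  set qn := (B n).q
  have hpqn : pn ≠ qn := (B n).hpq
  have hdn : 0 < dist pn qn := dist_pos.2 hpqn
  obtain ⟨K, hK⟩ := (B n).hF.1
  -- the embedded map
  set Fhat : M → lp (fun k => (B k).Y) ⊤ := fun x => lp.single ⊤ n (Fn x) with hFhatdef
  have hiso : ∀ x y : M, ‖Fhat x - Fhat y‖ = ‖Fn x - Fn y‖ := fun x y => by
    rw [hFhatdef]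
    simp only
    rw [lp_single_sub_top, lp_norm_single_top]
  have hKhat : LipschitzWith K Fhat := by
    refine LipschitzWith.of_dist_le_mul fun x y => ?_
    rw [dist_eq_norm, hiso, ← dist_eq_norm]
    exact hK.dist_le_mul x y
  have hFhat0 : Fhat z = 0 := by
    rw [hFhatdef]
    simp only
    have hFz : Fn z = 0 := (B n).hF.2
    rw [hFz, lp_single_zero_top]
  have hlipFhat : lipNorm Fhat = 1 := by
    have hsets : lipNorm Fhat = lipNorm Fn := by
      unfold lipNorm
      congr 1
      ext t
      constructor
      · rintro ⟨p, q, hpq, rfl⟩; exact ⟨p, q, hpq, by rw [hiso]⟩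
      · rintro ⟨p, q, hpq, rfl⟩; exact ⟨p, q, hpq, by rw [hiso]⟩
    rw [hsets]
    exact (B n).hnorm
  have hgt' : ‖Fhat pn - Fhat qn‖ > (1 - ηY ε') * dist pn qn := by
    rw [hiso]
    calc (1 - ηY ε') * dist pn qn < (1 - 1 / ((n : ℝ) + 1)) * dist pn qn :=
          mul_lt_mul_of_pos_right (by linarith) hdn
      _ < ‖Fn pn - Fn qn‖ := (B n).hgt
  obtain ⟨G, hG0, r, s, hrs, hGatt, hGnorm, hGF, hdist⟩ :=
    hηY ε' hε'pos Fhat ⟨⟨K, hKhat⟩, hFhat0⟩ hlipFhat pn qn hpqn hgt'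
  obtain ⟨KG, hKG⟩ := hG0.1
  have hdrs : 0 < dist r s := dist_pos.2 hrs
  -- the difference map and its Lipschitz constant
  set D : M → lp (fun k => (B k).Y) ⊤ := fun x => G x - Fhat x with hDdef
  have hKD : LipschitzWith (KG + K) D := hKG.sub hKhat
  have hDlt : lipNorm D < ε' := hGF
  have hDnonneg : 0 ≤ lipNorm D := lipNorm_nonneg' D
  -- coordinates away from n are small
  have hDcoord : ∀ (x y : M) (j : ℕ), ‖(G x - G y) j‖ ≤ ‖D x - D y‖ + ‖(Fhat x - Fhat y) j‖ := by
    intro x y j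
    have : (G x - G y) j = (D x - D y) j + (Fhat x - Fhat y) j := by
      rw [lp_coord_sub, lp_coord_sub, lp_coord_sub, hDdef]
      simp only
      rw [lp_coord_sub, lp_coord_sub]
      abel
    rw [this]
    exact (norm_add_le _ _).trans (by
      gcongr
      exact lp.norm_apply_le_norm ENNReal.top_ne_zero _ j)
  have hFhatcoord : ∀ (x y : M) (j : ℕ), j ≠ n → ‖(Fhat x - Fhat y) j‖ = 0 := by
    intro x y j hj
    rw [hFhatdef]
    simp only
    rw [lp_single_sub_top, lp.single_apply_ne _ _ _ hj, norm_zero]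
  -- norm attainment transfers to coordinate n
  have hattn : ‖(G r - G s) n‖ = dist r s := by
    have hsmall : ∀ j, j ≠ n → ‖(G r - G s) j‖ ≤ lipNorm D * dist r s := by
      intro j hj
      have h1 := hDcoord r s j
      rw [hFhatcoord r s j hj, add_zero] at h1
      exact h1.trans (norm_sub_le_lipNorm' hKD r s)
    have hc : lipNorm D * dist r s < ‖G r - G s‖ := by
      rw [hGatt]
      have : lipNorm D < 1 := hDlt.trans_le (hε'half.trans (by norm_num))
      nlinarith
    rw [lp_norm_coord_eq hc hsmall, hGatt]
  -- the coordinate map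
  set H : M → (B n).Y := fun x => G x n with hHdef
  have hcoordH : ∀ x y : M, H x - H y = (G x - G y) n := fun x y => by
    rw [lp_coord_sub]
  have hKH : LipschitzWith KG H := by
    refine LipschitzWith.of_dist_le_mul fun x y => ?_
    rw [dist_eq_norm, hcoordH]
    exact (lp.norm_apply_le_norm ENNReal.top_ne_zero _ n).trans
      (by rw [← dist_eq_norm]; exact hKG.dist_le_mul x y)
  have hH0 : H z = 0 := by
    rw [hHdef]
    simp only
    rw [hG0.2, lp.coeFn_zero]
    rfl
  have hHatt : ‖H r - H s‖ = dist r s := by rw [hcoordH, hattn]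
  have hHnorm : lipNorm H = 1 := by
    refine le_antisymm ?_ ?_
    · refine le_of_le_of_eq (lipNorm_le' (lipNorm_nonneg' G) fun x y => ?_) hGnorm
      rw [hcoordH]
      exact (lp.norm_apply_le_norm ENNReal.top_ne_zero _ n).trans
        (norm_sub_le_lipNorm' hKG x y)
    · have := div_le_lipNorm' hKH hrs
      rw [hHatt, div_self hdrs.ne'] at this
      exact this
  have hHdiff : lipNorm (fun x => H x - Fn x) < ε := by
    refine lt_of_le_of_lt (lipNorm_le' hDnonneg fun x y => ?_) (hDlt.trans_le hε'le)
    have hid : ∀ w : M, H w - Fn w = (D w) n := by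
      intro w
      rw [hDdef, hHdef]
      simp only
      rw [lp_coord_sub, hFhatdef]
      simp only
      rw [lp.single_apply_self]
    rw [hid, hid, ← lp_coord_sub]
    exact (lp.norm_apply_le_norm ENNReal.top_ne_zero _ n).trans
      (norm_sub_le_lipNorm' hKD x y)
  exact (B n).hno ⟨H, ⟨⟨KG, hKH⟩, hH0⟩, r, s, hrs, hHatt, hHnorm, hHdiff,
    hdist.trans_le hε'le⟩


/-- If `(M, Y)` has the Lip-BPB property for every Banach space `Y`, then there is a single
function `η_M`, depending only on `M`, witnessing the Lip-BPB property of `(M, Y)` for every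
Banach space `Y`. -/
theorem lipBPB_uniform_eta {M : Type*} [MetricSpace M] [CompleteSpace M] (z : M)
    (h : ∀ (Y : Type u) [NormedAddCommGroup Y] [NormedSpace ℝ Y] [CompleteSpace Y],
      LipBPB M z Y) :
    ∃ ηM : ℝ → ℝ, (∀ ε > 0, ηM ε > 0) ∧
      ∀ (Y : Type u) [NormedAddCommGroup Y] [NormedSpace ℝ Y] [CompleteSpace Y],
        LipBPBWith M z Y ηM := by
  classical
  have key : ∀ ε : ℝ, ∃ δ : ℝ, 0 < ε → (δ > 0 ∧
      ∀ (Y : Type u) [NormedAddCommGroup Y] [NormedSpace ℝ Y] [CompleteSpace Y],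
        ∀ F : M → Y, IsLip0 z F → lipNorm F = 1 →
        ∀ p q : M, p ≠ q → ‖F p - F q‖ > (1 - δ) * dist p q →
          ∃ G : M → Y, IsLip0 z G ∧ ∃ r s : M, r ≠ s ∧
            ‖G r - G s‖ = dist r s ∧ lipNorm G = 1 ∧
            lipNorm (fun x => G x - F x) < ε ∧
            (dist p r + dist q s) / dist p q < ε) := by
    intro ε
    by_cases hε : 0 < ε
    · obtain ⟨δ, hδ, hP⟩ := exists_uniform_delta z h hε
      exact ⟨δ, fun _ => ⟨hδ, hP⟩⟩
    · exact ⟨1, fun h' => absurd h' hε⟩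
  choose ηM hηM using key
  refine ⟨ηM, fun ε hε => (hηM ε hε).1, ?_⟩
  intro Y _ _ _
  exact ⟨fun ε hε => (hηM ε hε).1,
    fun ε hε F hF hFn p q hpq hgt => (hηM ε hε).2 Y F hF hFn p q hpq hgt⟩
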